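/- Let r ≥ 3, r-1 divides k+1, and t = ⌈(r-2)k/(r-1)⌉. Suppose n ≥ max{k, binom(k, k−t)·t + t − 1} and there exists an (n,k,t)-design, i.e., a family of k-subsets of [n] of size binom(n,t)/binom(k,t) in which every two distinct members intersect in fewer than t elements. Then the maximum size of an r-focal-free k-uniform hypergraph on [n] equals binom(n,t)/binom(k,t). -/
import Mathlib

open Finset

def IsFocalFree (r : ℕ) {α : Type*} [DecidableEq α] (F : Finset (Finset α)) : Prop :=
  ¬ ∃ (A₀ : Finset α) (A : Fin (r - 1) → Finset α), A₀ ∈ F ∧ (∀ i, A i ∈ F) ∧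
      Function.Injective A ∧ (∀ i, A i ≠ A₀) ∧
      ∀ x ∈ A₀, r - 2 ≤ (Finset.univ.filter fun i : Fin (r - 1) => x ∈ A i).card

namespace FocalAux

variable {n : ℕ}

/-- The number of members of `F` containing `T`. -/
def mult (F : Finset (Finset (Fin n))) (T : Finset (Fin n)) : ℕ :=
  (F.filter fun A => T ⊆ A).card

lemma one_le_mult {F : Finset (Finset (Fin n))} {T A : Finset (Fin n)}
    (hA : A ∈ F) (h : T ⊆ A) : 1 ≤ mult F T := by
  have h1 : A ∈ F.filter fun A => T ⊆ A := mem_filter.2 ⟨hA, h⟩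
  have h2 := card_pos.2 ⟨A, h1⟩
  unfold mult
  omega

/-- A chain of `r-1` members distinct from `B`, with pairwise disjoint
differences `B \ C`, yields a focal configuration. -/
lemma not_focalFree_of_chain {r : ℕ} (hr : 3 ≤ r)
    {F : Finset (Finset (Fin n))}
    {B : Finset (Fin n)} (hB : B ∈ F)
    {s : Finset (Finset (Fin n))} (hsF : s ⊆ F.erase B)
    (hdisj : ∀ C ∈ s, ∀ C' ∈ s, C ≠ C' → (B \ C) ∩ (B \ C') = ∅)
    (hcard : s.card = r - 1) :
    ¬ IsFocalFree r F := by
  intro hFF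
  apply hFF
  have hcard' : s.card = r - 1 := hcard
  set e : Fin (r-1) → {x // x ∈ s} := fun i => s.equivFin.symm (Fin.cast hcard.symm i) with he
  have einj : Function.Injective e := by
    intro i j hij
    have := s.equivFin.symm.injective hij
    exact (Fin.cast_injective _) this
  refine ⟨B, fun i => (e i : Finset (Fin n)), hB, ?_, ?_, ?_, ?_⟩
  · intro i
    have : (e i : Finset (Fin n)) ∈ s := (e i).2
    exact mem_of_mem_erase (hsF this)
  · intro i j hij
    have : (e i) = (e j) := Subtype.coe_injective hij
    exact einj this
  · intro i
    have : (e i : Finset (Fin n)) ∈ s := (e i).2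
    exact (mem_erase.1 (hsF this)).1
  · intro x hx
    show r - 2 ≤ (univ.filter fun i : Fin (r-1) => x ∈ (e i : Finset (Fin n))).card
    have hneg : (univ.filter fun i : Fin (r-1) => ¬ x ∈ (e i : Finset (Fin n))).card ≤ 1 := by
      rw [card_le_one]
      intro i hi j hj
      by_contra hij
      have hne : (e i : Finset (Fin n)) ≠ (e j : Finset (Fin n)) := by
        intro h
        exact hij (einj (Subtype.coe_injective h))
      have h1 : x ∈ (B \ (e i : Finset (Fin n))) ∩ (B \ (e j : Finset (Fin n))) := by
        simp only [mem_inter, mem_sdiff]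
        exact ⟨⟨hx, (mem_filter.1 hi).2⟩, ⟨hx, (mem_filter.1 hj).2⟩⟩
      rw [hdisj _ (e i).2 _ (e j).2 hne] at h1
      exact notMem_empty _ h1
    have hsum := card_filter_add_card_filter_not
      (s := (univ : Finset (Fin (r-1)))) (p := fun i => x ∈ (e i : Finset (Fin n)))
    rw [card_univ, Fintype.card_fin] at hsum
    omega

/-- Key structural lemma: every member of a focal-free family that shares a
`t`-subset with another member has a private `(t-1)`-set and an own `t`-set. -/
lemma exists_private {k r m t : ℕ} (hr : 3 ≤ r) (hm : 1 ≤ m)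
    (hkm : k + 1 = (r - 1) * m) (htm : t = (r - 2) * m)
    {F : Finset (Finset (Fin n))} (hFF : IsFocalFree r F)
    (hunif : ∀ A ∈ F, A.card = k)
    {B : Finset (Fin n)} (hB : B ∈ F)
    (hsh : ∃ T, T ⊆ B ∧ T.card = t ∧ 2 ≤ mult F T) :
    ∃ S, S ⊆ B ∧ S.card = t - 1 ∧ (∀ x, x ∉ B → mult F (insert x S) = 0) ∧
      ∃ T₀, T₀ ⊆ B ∧ T₀.card = t ∧ mult F T₀ = 1 := by
  classical
  have hkB : B.card = k := hunif B hB
  have hrm : (r - 2) + 1 = r - 1 := by omega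
  have htk : t + m = k + 1 := by rw [htm, hkm, ← hrm]; ring
  have ht1 : 1 ≤ t := by
    have : 1 * 1 ≤ (r - 2) * m := Nat.mul_le_mul (by omega) hm
    omega
  have htle : t ≤ k := by omega
  -- the finset of valid chains
  set V : Finset (Finset (Fin n)) → Prop := fun s =>
      (∀ C ∈ s, ∀ C' ∈ s, C ≠ C' → (B \ C) ∩ (B \ C') = ∅) ∧
      1 ≤ s.card ∧ (s.sup (fun C => B \ C)).card + 1 ≤ s.card * m with hV
  set CH : Finset (Finset (Finset (Fin n))) := (F.erase B).powerset.filter V with hCH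
  -- CH is nonempty
  obtain ⟨T, hTB, hTt, hT2⟩ := hsh
  have hCHne : CH.Nonempty := by
    have hlt : 1 < (F.filter fun A => T ⊆ A).card := by unfold mult at hT2; omega
    obtain ⟨C₁, hC₁, C₂, hC₂, hC₁₂⟩ := one_lt_card.1 hlt
    have key : ∃ C, C ∈ F ∧ T ⊆ C ∧ C ≠ B := by
      by_cases h : C₁ = B
      · exact ⟨C₂, (mem_filter.1 hC₂).1, (mem_filter.1 hC₂).2, by rw [← h]; exact fun hh => hC₁₂ hh.symm⟩
      · exact ⟨C₁, (mem_filter.1 hC₁).1, (mem_filter.1 hC₁).2, h⟩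
    obtain ⟨C, hCF, hTC, hCB⟩ := key
    refine ⟨{C}, mem_filter.2 ⟨mem_powerset.2 ?_, ?_, ?_, ?_⟩⟩
    · rw [singleton_subset_iff, mem_erase]; exact ⟨hCB, hCF⟩
    · intro a ha b hb hab
      rw [mem_singleton] at ha hb
      exact absurd (ha.trans hb.symm) hab
    · simp
    · rw [sup_singleton, card_singleton, one_mul]
      have h1 : (B \ C).card + (B ∩ C).card = k := by rw [card_sdiff_add_card_inter, hkB]
      have h2 : t ≤ (B ∩ C).card := by
        calc t = T.card := hTt.symm
        _ ≤ (B ∩ C).card := card_le_card (subset_inter hTB hTC)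
      omega
  -- maximal chain
  obtain ⟨s, hsCH, hsmax⟩ := CH.exists_max_image (fun s => s.card) hCHne
  obtain ⟨hsub, hdisj, hs1, hsup⟩ : s ⊆ F.erase B ∧ V s := by
    have := mem_filter.1 hsCH
    exact ⟨mem_powerset.1 this.1, this.2⟩
  -- chains have length at most r - 2
  have hcap : s.card ≤ r - 2 := by
    by_contra hcon
    obtain ⟨s', hs's, hs'c⟩ := s.exists_subset_card_eq (show r - 1 ≤ s.card by omega)
    exact not_focalFree_of_chain hr hB (hs's.trans hsub)
      (fun C hC C' hC' => hdisj C (hs's hC) C' (hs's hC')) hs'c hFF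
  set U : Finset (Fin n) := s.sup (fun C => B \ C) with hU
  have huB : U ⊆ B := Finset.sup_le (fun C _ => sdiff_subset)
  have hu : U.card ≤ t - 1 := by
    have h1 : s.card * m ≤ (r - 2) * m := Nat.mul_le_mul_right m hcap
    rw [← htm] at h1
    omega
  -- maximality: no extension
  have hmaxT : ∀ T', U ⊆ T' → T'.card = t → (T' \ B).card ≤ 1 →
      ∀ C ∈ F, T' ⊆ C → C = B ∨ C ∈ s := by
    intro T' hUT' hT't hT'B C hCF hT'C
    by_contra hcon
    push_neg at hcon
    obtain ⟨hCB, hCs⟩ := hcon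
    have hDnew : (B \ C).card ≤ m := by
      have h1 : (B \ C).card + (B ∩ C).card = k := by rw [card_sdiff_add_card_inter, hkB]
      have h3 : (T' \ B).card + (T' ∩ B).card = t := by rw [card_sdiff_add_card_inter, hT't]
      have h2 : (T' ∩ B).card ≤ (B ∩ C).card := by
        apply card_le_card
        intro x hx
        rw [mem_inter] at hx ⊢
        exact ⟨hx.2, hT'C hx.1⟩
      omega
    have hmem : insert C s ∈ CH := by
      refine mem_filter.2 ⟨mem_powerset.2 ?_, ?_, ?_, ?_⟩
      · exact insert_subset (mem_erase.2 ⟨hCB, hCF⟩) hsub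
      · intro C₁ h₁ C₂ h₂ hne
        rw [mem_insert] at h₁ h₂
        have key : ∀ C₂' ∈ s, (B \ C) ∩ (B \ C₂') = ∅ := by
          intro C₂' h₂'
          rw [eq_empty_iff_forall_notMem]
          intro x hx
          rw [mem_inter, mem_sdiff, mem_sdiff] at hx
          have : x ∈ U := mem_of_subset (Finset.le_sup h₂') (mem_sdiff.2 hx.2)
          exact hx.1.2 (hT'C (hUT' this))
        rcases h₁ with rfl | h₁ <;> rcases h₂ with rfl | h₂
        · exact absurd rfl hne
        · exact key _ h₂
        · rw [inter_comm]; exact key _ h₁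
        · exact hdisj _ h₁ _ h₂ hne
      · have := card_insert_of_notMem hCs; omega
      · rw [sup_insert, ← hU, card_insert_of_notMem hCs]
        have h4 : ((B \ C) ⊔ U).card ≤ (B \ C).card + U.card := card_union_le _ _
        have h5 : (s.card + 1) * m = s.card * m + m := by ring
        omega
    have h7 := hsmax _ hmem
    rw [card_insert_of_notMem hCs] at h7
    omega
  -- extend U to a (t-1)-set S inside B
  obtain ⟨S, hUS, hSB, hScard⟩ := exists_subsuperset_card_eq huB hu (by omega)
  refine ⟨S, hSB, hScard, ?_, ?_⟩
  · -- private sets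
    intro x hx
    have hxS : x ∉ S := fun h => hx (hSB h)
    unfold mult
    rw [card_eq_zero, filter_eq_empty_iff]
    intro C hCF hsubC
    have hT't : (insert x S).card = t := by rw [card_insert_of_notMem hxS]; omega
    have hT'B : ((insert x S) \ B).card ≤ 1 := by
      have : (insert x S) \ B ⊆ {x} := by
        intro y hy
        rw [mem_sdiff, mem_insert] at hy
        rcases hy.1 with rfl | h
        · exact mem_singleton_self _
        · exact absurd (hSB h) hy.2
      calc ((insert x S) \ B).card ≤ ({x} : Finset (Fin n)).card := card_le_card this
        _ = 1 := card_singleton _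
    rcases hmaxT _ (hUS.trans (subset_insert _ _)) hT't hT'B C hCF hsubC with rfl | hCs
    · exact hx (hsubC (mem_insert_self _ _))
    · -- C ∈ s : contradiction since B \ C ⊆ C
      have hBC : B \ C ⊆ C := by
        intro y hy
        exact hsubC ((hUS.trans (subset_insert _ _)) (mem_of_subset (Finset.le_sup hCs) hy))
      have : B \ C = ∅ := by
        rw [eq_empty_iff_forall_notMem]
        intro y hy
        exact (mem_sdiff.1 hy).2 (hBC hy)
      have hBsubC : B ⊆ C := sdiff_eq_empty_iff_subset.1 this
      have : B = C := eq_of_subset_of_card_le hBsubC (by rw [hunif C hCF, hkB])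
      exact (mem_erase.1 (hsub hCs)).1 this.symm
  · -- own t-set
    have hBS : (B \ S).Nonempty := by
      rw [← card_pos, card_sdiff_of_subset hSB, hkB]
      omega
    obtain ⟨b, hb⟩ := hBS
    rw [mem_sdiff] at hb
    refine ⟨insert b S, insert_subset hb.1 hSB, by rw [card_insert_of_notMem hb.2]; omega, ?_⟩
    unfold mult
    have : F.filter (fun A => insert b S ⊆ A) = {B} := by
      ext C
      rw [mem_filter, mem_singleton]
      constructor
      · rintro ⟨hCF, hsubC⟩
        have hT't : (insert b S).card = t := by rw [card_insert_of_notMem hb.2]; omega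
        have hT'B : ((insert b S) \ B).card ≤ 1 := by
          have : (insert b S) \ B = ∅ := by
            rw [sdiff_eq_empty_iff_subset]
            exact insert_subset hb.1 hSB
          rw [this, card_empty]; omega
        rcases hmaxT _ (hUS.trans (subset_insert _ _)) hT't hT'B C hCF hsubC with rfl | hCs
        · rfl
        · have hBC : B \ C ⊆ C := by
            intro y hy
            exact hsubC ((hUS.trans (subset_insert _ _)) (mem_of_subset (Finset.le_sup hCs) hy))
          have : B \ C = ∅ := by
            rw [eq_empty_iff_forall_notMem]
            intro y hy
            exact (mem_sdiff.1 hy).2 (hBC hy)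
          have hBsubC : B ⊆ C := sdiff_eq_empty_iff_subset.1 this
          have : B = C := eq_of_subset_of_card_le hBsubC (by rw [hunif C hCF, hkB])
          exact absurd this.symm (mem_erase.1 (hsub hCs)).1
      · rintro rfl
        exact ⟨hB, insert_subset hb.1 hSB⟩
    rw [this, card_singleton]

/-- The upper bound: a focal-free k-uniform family has at most
binom(n,t)/binom(k,t) members. -/
lemma upper {k r m t : ℕ} (hr : 3 ≤ r) (hm : 1 ≤ m)
    (hkm : k + 1 = (r - 1) * m) (htm : t = (r - 2) * m)
    (hn1 : k ≤ n) (hn2 : k.choose t * t + t - 1 ≤ n)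
    {F : Finset (Finset (Fin n))} (hFF : IsFocalFree r F)
    (hunif : ∀ A ∈ F, A.card = k) :
    F.card * k.choose t ≤ n.choose t := by
  classical
  have hrm : (r - 2) + 1 = r - 1 := by omega
  have htk : t + m = k + 1 := by rw [htm, hkm, ← hrm]; ring
  have ht1 : 1 ≤ t := by
    have : 1 * 1 ≤ (r - 2) * m := Nat.mul_le_mul (by omega) hm
    omega
  have htle : t ≤ k := by omega
  have hCpos : 0 < k.choose t := Nat.choose_pos htle
  set Tall : Finset (Finset (Fin n)) := powersetCard t (univ : Finset (Fin n)) with hTall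
  have hTallcard : Tall.card = n.choose t := by
    rw [hTall, card_powersetCard, card_univ, Fintype.card_fin]
  -- (1) total incidence count
  have hsum1 : ∑ T ∈ Tall, mult F T = F.card * k.choose t := by
    unfold mult
    rw [show ∑ T ∈ Tall, (F.filter fun A => T ⊆ A).card
        = ∑ T ∈ Tall, ∑ A ∈ F, if T ⊆ A then 1 else 0 by
      exact sum_congr rfl fun T _ => card_filter _ _]
    rw [sum_comm]
    rw [show ∑ A ∈ F, ∑ T ∈ Tall, (if T ⊆ A then 1 else 0)
        = ∑ A ∈ F, (Tall.filter fun T => T ⊆ A).card by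
      exact sum_congr rfl fun A _ => (card_filter _ _).symm]
    rw [show ∑ A ∈ F, (Tall.filter fun T => T ⊆ A).card = ∑ A ∈ F, k.choose t by
      refine sum_congr rfl fun A hA => ?_
      have hfe : Tall.filter (fun T => T ⊆ A) = powersetCard t A := by
        ext T
        simp only [hTall, mem_filter, mem_powersetCard, subset_univ, true_and]
        tauto
      rw [hfe, card_powersetCard, hunif A hA]]
    rw [sum_const, smul_eq_mul]
  set cov : Finset (Finset (Fin n)) := Tall.filter (fun T => 1 ≤ mult F T) with hcov
  set sh : Finset (Finset (Fin n)) := Tall.filter (fun T => 2 ≤ mult F T) with hsh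
  have hshcov : sh ⊆ cov := by
    intro T hT
    rw [hsh, mem_filter] at hT
    rw [hcov, mem_filter]
    exact ⟨hT.1, by omega⟩
  have hsum2 : ∑ T ∈ Tall, mult F T = ∑ T ∈ cov, mult F T := by
    rw [hcov]
    exact (sum_filter_of_ne (fun T _ h => by omega)).symm
  have hsplit : ∑ T ∈ cov, mult F T = ∑ T ∈ cov \ sh, mult F T + ∑ T ∈ sh, mult F T :=
    (sum_sdiff hshcov).symm
  have hone : ∑ T ∈ cov \ sh, mult F T = (cov \ sh).card := by
    rw [card_eq_sum_ones]
    refine sum_congr rfl fun T hT => ?_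
    rw [mem_sdiff, hcov, hsh, mem_filter, mem_filter] at hT
    have h1 := hT.1.2
    have h2 : ¬ (2 ≤ mult F T) := fun h => hT.2 ⟨hT.1.1, h⟩
    omega
  set E : Finset (Finset (Fin n)) := F.filter (fun B => ∃ T ∈ sh, T ⊆ B) with hE
  have hEsub : E ⊆ F := filter_subset _ _
  have hchain : ∀ B ∈ E, ∃ S, S ⊆ B ∧ S.card = t - 1 ∧
      (∀ x, x ∉ B → mult F (insert x S) = 0) ∧
      ∃ T₀, T₀ ⊆ B ∧ T₀.card = t ∧ mult F T₀ = 1 := by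
    intro B hBE
    rw [hE, mem_filter] at hBE
    obtain ⟨hBF, T, hTsh, hTB⟩ := hBE
    rw [hsh, mem_filter, hTall, mem_powersetCard] at hTsh
    exact exists_private hr hm hkm htm hFF hunif hBF ⟨T, hTB, hTsh.1.2, hTsh.2⟩
  -- per-member bound on shared t-subsets
  have hshB : ∀ B ∈ E, (sh.filter fun T => T ⊆ B).card ≤ k.choose t - 1 := by
    intro B hBE
    obtain ⟨S, _, _, _, T₀, hT₀B, hT₀t, hT₀1⟩ := hchain B hBE
    have hsub2 : sh.filter (fun T => T ⊆ B) ⊆ (powersetCard t B).erase T₀ := by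
      intro T hT
      rw [mem_filter, hsh, mem_filter, hTall, mem_powersetCard] at hT
      rw [mem_erase, mem_powersetCard]
      refine ⟨fun h => by rw [h] at hT; omega, hT.2, hT.1.1.2⟩
    calc (sh.filter fun T => T ⊆ B).card ≤ ((powersetCard t B).erase T₀).card :=
          card_le_card hsub2
      _ = (powersetCard t B).card - 1 :=
          card_erase_of_mem (mem_powersetCard.2 ⟨hT₀B, hT₀t⟩)
      _ = k.choose t - 1 := by rw [card_powersetCard, hunif B (hEsub hBE)]
  have hsum3 : ∑ T ∈ sh, mult F T = ∑ B ∈ E, (sh.filter fun T => T ⊆ B).card := by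
    have step1 : ∀ T ∈ sh, mult F T = (E.filter fun A => T ⊆ A).card := by
      intro T hT
      unfold mult
      congr 1
      ext A
      rw [mem_filter, mem_filter, hE, mem_filter]
      constructor
      · rintro ⟨hAF, hTA⟩
        exact ⟨⟨hAF, T, hT, hTA⟩, hTA⟩
      · rintro ⟨⟨hAF, _⟩, hTA⟩
        exact ⟨hAF, hTA⟩
    rw [sum_congr rfl step1]
    rw [show ∑ T ∈ sh, (E.filter fun A => T ⊆ A).card
        = ∑ T ∈ sh, ∑ B ∈ E, if T ⊆ B then 1 else 0 by
      exact sum_congr rfl fun T _ => card_filter _ _]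
    rw [sum_comm]
    exact sum_congr rfl fun B _ => (card_filter _ _).symm
  have h3 : ∑ T ∈ sh, mult F T ≤ E.card * (k.choose t - 1) := by
    rw [hsum3]
    calc ∑ B ∈ E, (sh.filter fun T => T ⊆ B).card ≤ ∑ B ∈ E, (k.choose t - 1) :=
          sum_le_sum hshB
      _ = E.card * (k.choose t - 1) := by rw [sum_const, smul_eq_mul]
  -- choose private sets
  have hchainS : ∀ B ∈ E, ∃ Sb : Finset (Fin n), Sb ⊆ B ∧ Sb.card = t - 1 ∧
      ∀ x, x ∉ B → mult F (insert x Sb) = 0 := by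
    intro B hBE
    obtain ⟨S, h1, h2, h3, _⟩ := hchain B hBE
    exact ⟨S, h1, h2, h3⟩
  choose! S hS1 hS2 hS3 using hchainS
  set supp : Finset (Fin n) → Finset (Finset (Fin n)) :=
    fun B => ((univ : Finset (Fin n)) \ B).image (fun x => insert x (S B)) with hsupp
  set 𝒰 : Finset (Finset (Fin n)) := E.biUnion supp with h𝒰
  have hsupcard : ∀ B ∈ E, (supp B).card = n - k := by
    intro B hBE
    rw [hsupp]
    rw [card_image_of_injOn, card_sdiff_of_subset (subset_univ _), card_univ, Fintype.card_fin,
      hunif B (hEsub hBE)]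
    intro x hx y hy hxy
    simp only [coe_sdiff, Set.mem_diff, mem_coe, coe_univ, Set.mem_univ, true_and] at hx hy
    have hxS : x ∉ S B := fun h => hx (hS1 B hBE h)
    have hyS : y ∉ S B := fun h => hy (hS1 B hBE h)
    have hxy' : insert x (S B) = insert y (S B) := hxy
    have : x ∈ insert y (S B) := by rw [← hxy']; exact mem_insert_self _ _
    rcases mem_insert.1 this with h | h
    · exact h
    · exact absurd h hxS
  have h𝒰mem : ∀ T ∈ 𝒰, mult F T = 0 ∧ T.card = t := by
    intro T hT
    rw [h𝒰, mem_biUnion] at hT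
    obtain ⟨B, hBE, hTmem⟩ := hT
    rw [hsupp, mem_image] at hTmem
    obtain ⟨x, hx, rfl⟩ := hTmem
    rw [mem_sdiff] at hx
    have hxS : x ∉ S B := fun h => hx.2 (hS1 B hBE h)
    constructor
    · exact hS3 B hBE x hx.2
    · rw [card_insert_of_notMem hxS, hS2 B hBE]; omega
  -- multiplicity bound: each T is in at most t supplies
  have hmultbd : ∀ T ∈ 𝒰, (E.filter fun B => T ∈ supp B).card ≤ t := by
    intro T hT
    have hTt : T.card = t := (h𝒰mem T hT).2
    have hmaps : ∀ B ∈ E.filter (fun B => T ∈ supp B), S B ∈ powersetCard (t-1) T := by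
      intro B hB
      rw [mem_filter] at hB
      obtain ⟨hBE, hTs⟩ := hB
      rw [hsupp, mem_image] at hTs
      obtain ⟨x, _, rfl⟩ := hTs
      rw [mem_powersetCard]
      exact ⟨subset_insert _ _, hS2 B hBE⟩
    have hinj : Set.InjOn S ↑(E.filter fun B => T ∈ supp B) := by
      intro B₁ hB₁ B₂ hB₂ hSeq
      simp only [mem_coe, mem_filter] at hB₁ hB₂
      by_contra hne
      have hcards : B₁.card = B₂.card := by
        rw [hunif B₁ (hEsub hB₁.1), hunif B₂ (hEsub hB₂.1)]
      have hnsub : ¬ (B₂ ⊆ B₁) := fun h => hne (eq_of_subset_of_card_le h (le_of_eq hcards)).symm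
      obtain ⟨y, hy⟩ := not_subset.1 hnsub
      have h0 : mult F (insert y (S B₁)) = 0 := hS3 B₁ hB₁.1 y hy.2
      have hsub' : insert y (S B₁) ⊆ B₂ := by
        rw [hSeq]
        exact insert_subset hy.1 (hS1 B₂ hB₂.1)
      have := one_le_mult (hEsub hB₂.1) hsub'
      omega
    calc (E.filter fun B => T ∈ supp B).card ≤ (powersetCard (t-1) T).card :=
          card_le_card_of_injOn S hmaps hinj
      _ = t.choose (t-1) := by rw [card_powersetCard, hTt]
      _ = t := by
          have h5 : t - (t - 1) = 1 := by omega
          rw [← Nat.choose_symm (by omega : t - 1 ≤ t), h5, Nat.choose_one_right]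
  -- summing supplies
  have hsupsum : ∑ B ∈ E, (supp B).card ≤ t * 𝒰.card := by
    have e1 : ∀ B ∈ E, (supp B).card = (𝒰.filter fun T => T ∈ supp B).card := by
      intro B hBE
      congr 1
      ext T
      rw [mem_filter]
      constructor
      · intro h
        exact ⟨by rw [h𝒰]; exact mem_biUnion.2 ⟨B, hBE, h⟩, h⟩
      · exact fun h => h.2
    rw [sum_congr rfl e1]
    rw [show ∑ B ∈ E, (𝒰.filter fun T => T ∈ supp B).card
        = ∑ B ∈ E, ∑ T ∈ 𝒰, if T ∈ supp B then 1 else 0 by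
      exact sum_congr rfl fun B _ => card_filter _ _]
    rw [sum_comm]
    rw [show ∑ T ∈ 𝒰, ∑ B ∈ E, (if T ∈ supp B then 1 else 0)
        = ∑ T ∈ 𝒰, (E.filter fun B => T ∈ supp B).card by
      exact sum_congr rfl fun T _ => (card_filter _ _).symm]
    calc ∑ T ∈ 𝒰, (E.filter fun B => T ∈ supp B).card ≤ ∑ _T ∈ 𝒰, t :=
          sum_le_sum hmultbd
      _ = 𝒰.card * t := by rw [sum_const, smul_eq_mul]
      _ = t * 𝒰.card := mul_comm _ _
  have hEbound : E.card * (k.choose t - 1) ≤ 𝒰.card := by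
    have h1 : ∑ B ∈ E, (supp B).card = E.card * (n - k) := by
      rw [sum_congr rfl hsupcard, sum_const, smul_eq_mul]
    have h2 : t * (k.choose t - 1) ≤ n - k := by
      obtain ⟨c, hc⟩ := Nat.exists_eq_add_of_le hCpos
      have e2 : t * (k.choose t - 1) = t * c := by rw [hc]; congr 1; omega
      have e3 : k.choose t * t = t * c + t := by rw [hc]; ring
      have hmt : m ≤ t := by
        rw [htm]
        exact Nat.le_mul_of_pos_left m (by omega)
      omega
    have h4 : t * (E.card * (k.choose t - 1)) ≤ t * 𝒰.card := by
      calc t * (E.card * (k.choose t - 1)) = E.card * (t * (k.choose t - 1)) := by ring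
        _ ≤ E.card * (n - k) := Nat.mul_le_mul_left _ h2
        _ = ∑ B ∈ E, (supp B).card := h1.symm
        _ ≤ t * 𝒰.card := hsupsum
    exact Nat.le_of_mul_le_mul_left h4 (by omega)
  -- final assembly
  have hdisj𝒰 : Disjoint (cov \ sh) 𝒰 := by
    rw [disjoint_left]
    intro T hT hT𝒰
    have h1 := (h𝒰mem T hT𝒰).1
    have h2 : T ∈ cov := (sdiff_subset) hT
    rw [hcov, mem_filter] at h2
    omega
  have hfinal : (cov \ sh).card + 𝒰.card ≤ n.choose t := by
    rw [← hTallcard, ← card_union_of_disjoint hdisj𝒰]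
    refine card_le_card (union_subset ?_ ?_)
    · exact (sdiff_subset).trans (filter_subset _ _)
    · intro T hT
      rw [hTall, mem_powersetCard]
      exact ⟨subset_univ _, (h𝒰mem T hT).2⟩
  calc F.card * k.choose t = ∑ T ∈ Tall, mult F T := hsum1.symm
    _ = ∑ T ∈ cov, mult F T := hsum2
    _ = ∑ T ∈ cov \ sh, mult F T + ∑ T ∈ sh, mult F T := hsplit
    _ = (cov \ sh).card + ∑ T ∈ sh, mult F T := by rw [hone]
    _ ≤ (cov \ sh).card + E.card * (k.choose t - 1) := Nat.add_le_add_left h3 _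
    _ ≤ (cov \ sh).card + 𝒰.card := Nat.add_le_add_left hEbound _
    _ ≤ n.choose t := hfinal

end FocalAux

open FocalAux in
/-- With an (n,k,t)-design, the maximum size of an r-focal-free k-uniform hypergraph
on [n] is exactly binom(n,t)/binom(k,t). -/
theorem focal_free_exact_from_design {n k r t : ℕ} (hr : 3 ≤ r) (hk : 2 ≤ k)
    (hdvd : (r - 1) ∣ (k + 1))
    (ht : t = ((r - 2) * k + r - 2) / (r - 1))
    (hn1 : k ≤ n) (hn2 : k.choose (k - t) * t + t - 1 ≤ n)
    (hdesign : ∃ D : Finset (Finset (Fin n)), (∀ A ∈ D, A.card = k) ∧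
      (∀ A ∈ D, ∀ B ∈ D, A ≠ B → (A ∩ B).card < t) ∧
      D.card * k.choose t = n.choose t) :
    IsGreatest {c : ℕ | ∃ F : Finset (Finset (Fin n)),
        (∀ A ∈ F, A.card = k) ∧ IsFocalFree r F ∧ F.card = c}
      (n.choose t / k.choose t) := by
  classical
  obtain ⟨m, hm⟩ := hdvd
  have hm1 : 1 ≤ m := by
    rcases Nat.eq_zero_or_pos m with h | h
    · rw [h, mul_zero] at hm; omega
    · exact h
  have htm : t = (r - 2) * m := by
    have e0 : (r - 2) * (k + 1) = (r - 2) * k + (r - 2) := by ring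
    have e1 : (r - 2) * k + r - 2 = (r - 2) * (k + 1) := by omega
    have e2 : (r - 2) * (k + 1) = (r - 1) * ((r - 2) * m) := by rw [hm]; ring
    rw [ht, e1, e2, Nat.mul_div_cancel_left _ (show 0 < r - 1 by omega)]
  have hrm : (r - 2) + 1 = r - 1 := by omega
  have htk : t + m = k + 1 := by rw [htm, hm, ← hrm]; ring
  have ht1 : 1 ≤ t := by
    have : 1 * 1 ≤ (r - 2) * m := Nat.mul_le_mul (by omega) hm1
    omega
  have htle : t ≤ k := by omega
  have hCpos : 0 < k.choose t := Nat.choose_pos htle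
  have hn2' : k.choose t * t + t - 1 ≤ n := by rwa [Nat.choose_symm htle] at hn2
  obtain ⟨D, hD1, hD2, hD3⟩ := hdesign
  have hDcard : D.card = n.choose t / k.choose t := by
    rw [← hD3, Nat.mul_div_cancel _ hCpos]
  constructor
  · -- membership: the design is focal-free
    refine ⟨D, hD1, ?_, hDcard⟩
    rintro ⟨A₀, A, hA₀, hA, hinj, hne, hcovge⟩
    have hsum : (r - 2) * k ≤ ∑ i : Fin (r - 1), (A₀ ∩ A i).card := by
      calc (r - 2) * k = ∑ _x ∈ A₀, (r - 2) := by
            rw [sum_const, smul_eq_mul, hD1 A₀ hA₀, mul_comm]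
        _ ≤ ∑ x ∈ A₀, (univ.filter fun i : Fin (r-1) => x ∈ A i).card :=
            sum_le_sum hcovge
        _ = ∑ x ∈ A₀, ∑ i : Fin (r-1), (if x ∈ A i then 1 else 0) :=
            sum_congr rfl fun x _ => card_filter _ _
        _ = ∑ i : Fin (r-1), ∑ x ∈ A₀, (if x ∈ A i then 1 else 0) := sum_comm
        _ = ∑ i : Fin (r-1), (A₀.filter fun x => x ∈ A i).card :=
            sum_congr rfl fun i _ => (card_filter _ _).symm
        _ = ∑ i : Fin (r-1), (A₀ ∩ A i).card := by
            refine sum_congr rfl fun i _ => ?_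
            rw [filter_mem_eq_inter]
    have hub : ∑ i : Fin (r - 1), (A₀ ∩ A i).card ≤ (r - 1) * (t - 1) := by
      calc ∑ i : Fin (r - 1), (A₀ ∩ A i).card ≤ ∑ _i : Fin (r - 1), (t - 1) := by
            refine sum_le_sum fun i _ => ?_
            have := hD2 A₀ hA₀ (A i) (hA i) (Ne.symm (hne i))
            omega
        _ = (r - 1) * (t - 1) := by
            rw [sum_const, card_univ, Fintype.card_fin, smul_eq_mul]
    have hid : (r - 1) * t = (r - 2) * (k + 1) := by rw [htm, hm, ← hrm]; ring
    have hx1 : (r - 1) * (t - 1) + (r - 1) = (r - 1) * t := by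
      have : (r-1) * ((t-1) + 1) = (r-1) * (t-1) + (r-1) := by ring
      rw [← this]
      congr 1
      omega
    have hx2 : (r - 2) * (k + 1) = (r - 2) * k + (r - 2) := by ring
    omega
  · -- upper bound
    rintro c ⟨F, hunif, hFF, rfl⟩
    rw [Nat.le_div_iff_mul_le hCpos]
    exact upper hr hm1 hm htm hn1 hn2' hFF hunif
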